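/- Let ([p*],[u*]) be an optimal process for the pro-rata control problem with η∈[0,1) and γ>0. If u*_i(t)>0 for some node i and period t, then w*_i(t+1)=0 and, moreover, w*_i(s)=0 for every s∈{0,…,t}, where w* is the net worth sequence generated by the optimal process. -/
import Mathlib


open Finset

noncomputable section

/-- The relative (pro-rata) liability matrix `A` built from the nominal liability matrix. -/
def proRata {n : ℕ} (Pbar : Matrix (Fin n) (Fin n) ℝ) : Matrix (Fin n) (Fin n) ℝ :=
  fun i j =>
    if 0 < ∑ k, Pbar i k then Pbar i j / ∑ k, Pbar i k
    else if i = j then 1 else 0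

/-- Residual liability vectors: `p̄(0) = p̄`, `p̄(t+1) = α (p̄(t) - p(t))`. -/
def resLiabVec {n : ℕ} (α : ℝ) (pbar : Fin n → ℝ)
    (p : ℕ → Fin n → ℝ) : ℕ → Fin n → ℝ
  | 0 => pbar
  | t + 1 => fun i => α * (resLiabVec α pbar p t i - p t i)

/-- Net worths: `w(0) = 0`, `w(t+1) = w(t) + c(t) + Aᵀ p(t) - p(t)`. -/
def netWorthVec {n : ℕ} (A : Matrix (Fin n) (Fin n) ℝ)
    (c p : ℕ → Fin n → ℝ) : ℕ → Fin n → ℝ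
  | 0 => fun _ => 0
  | t + 1 => fun i => netWorthVec A c p t i + c t i + (∑ j, A j i * p t j) - p t i

/-- Cumulative injected cash `B(t) = Σ_{k=0}^{t} 1ᵀ u(k)`. -/
def budget {n : ℕ} (u : ℕ → Fin n → ℝ) (t : ℕ) : ℝ :=
  ∑ k ∈ range (t + 1), ∑ i, u k i

/-- Feasibility of a process `([p],[u])` for the pro-rata control problem. -/
def FeasiblePro {n : ℕ} (T : ℕ) (α : ℝ) (pbar : Fin n → ℝ)
    (A : Matrix (Fin n) (Fin n) ℝ) (e : ℕ → Fin n → ℝ) (F : ℕ → ℝ)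
    (p u : ℕ → Fin n → ℝ) : Prop :=
  ∀ t, t < T →
    (∀ i, 0 ≤ p t i) ∧ (∀ i, 0 ≤ u t i) ∧
    (∀ i, p t i ≤ resLiabVec α pbar p t i) ∧
    (∀ i, 0 ≤ netWorthVec A (fun s i => e s i + u s i) p (t + 1) i) ∧
    budget u t ≤ F t

/-- Cost `J([p],[u])` of the pro-rata control problem. -/
def costPro {n : ℕ} (T : ℕ) (α η γ : ℝ) (pbar : Fin n → ℝ)
    (p u : ℕ → Fin n → ℝ) : ℝ :=
  (1 - η) * ∑ t ∈ range T, ∑ i, (resLiabVec α pbar p t i - p t i)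
    + η * ∑ i, resLiabVec α pbar p T i
    + γ * budget u (T - 1)

/-- Optimality for the pro-rata control problem. -/
def OptimalPro {n : ℕ} (T : ℕ) (α η γ : ℝ) (pbar : Fin n → ℝ)
    (A : Matrix (Fin n) (Fin n) ℝ) (e : ℕ → Fin n → ℝ) (F : ℕ → ℝ)
    (p u : ℕ → Fin n → ℝ) : Prop :=
  FeasiblePro T α pbar A e F p u ∧
  ∀ p' u', FeasiblePro T α pbar A e F p' u' →
    costPro T α η γ pbar p u ≤ costPro T α η γ pbar p' u'

set_option maxHeartbeats 1600000

lemma resLiab_closed {n : ℕ} (α : ℝ) (pbar : Fin n → ℝ) (p : ℕ → Fin n → ℝ)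
    (t : ℕ) (i : Fin n) :
    resLiabVec α pbar p t i = α ^ t * pbar i - ∑ k ∈ range t, α ^ (t - k) * p k i := by
  induction t with
  | zero => simp [resLiabVec]
  | succ t ih =>
    rw [show resLiabVec α pbar p (t+1) i = α * (resLiabVec α pbar p t i - p t i) from rfl, ih,
      Finset.sum_range_succ]
    have h1 : ∀ k ∈ range t, α ^ (t + 1 - k) * p k i = α * (α ^ (t - k) * p k i) := by
      intro k hk
      rw [Finset.mem_range] at hk
      rw [show t + 1 - k = (t - k) + 1 by omega, pow_succ]
      ring
    rw [Finset.sum_congr rfl h1, show t + 1 - t = 1 by omega, ← Finset.mul_sum]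
    simp [pow_succ]
    ring

lemma netWorth_closed {n : ℕ} (A : Matrix (Fin n) (Fin n) ℝ) (c p : ℕ → Fin n → ℝ)
    (t : ℕ) (i : Fin n) :
    netWorthVec A c p t i
      = ∑ k ∈ range t, (c k i + (∑ j, A j i * p k j) - p k i) := by
  induction t with
  | zero => simp [netWorthVec]
  | succ t ih =>
    rw [show netWorthVec A c p (t+1) i
        = netWorthVec A c p t i + c t i + (∑ j, A j i * p t j) - p t i from rfl, ih,
      Finset.sum_range_succ]
    ring

lemma sum_ite_const {β : Type*} (s : Finset β) (P : Prop) [Decidable P] (f : β → ℝ) :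
    (∑ x ∈ s, if P then f x else 0) = if P then ∑ x ∈ s, f x else 0 := by
  split <;> simp

/-- monotonicity of worth over an interval with no payments -/
lemma worth_mono {n T : ℕ} {A : Matrix (Fin n) (Fin n) ℝ} {c p : ℕ → Fin n → ℝ}
    (hA0 : ∀ a b, 0 ≤ A a b) (hc : ∀ k, k < T → ∀ j, 0 ≤ c k j)
    (hp0 : ∀ k, k < T → ∀ j, 0 ≤ p k j)
    (j : Fin n) (s m : ℕ) (hsm : s ≤ m) (hmT : m ≤ T)
    (hz : ∀ k, s ≤ k → k < m → p k j = 0) :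
    netWorthVec A c p s j ≤ netWorthVec A c p m j := by
  rw [netWorth_closed, netWorth_closed, ← Finset.sum_range_add_sum_Ico _ hsm]
  have h : ∀ k ∈ Finset.Ico s m, 0 ≤ c k j + (∑ l, A l j * p k l) - p k j := by
    intro k hk
    rw [Finset.mem_Ico] at hk
    have hkT : k < T := by omega
    rw [hz k hk.1 hk.2]
    have : 0 ≤ ∑ l, A l j * p k l :=
      Finset.sum_nonneg fun l _ => mul_nonneg (hA0 l j) (hp0 k hkT l)
    have := hc k hkT j
    linarith
  have := Finset.sum_nonneg h
  linarith

/-- positivity of residual gaps before a time with positive residual -/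
lemma gap_pos {n T : ℕ} {α : ℝ} {pbar : Fin n → ℝ} {p : ℕ → Fin n → ℝ}
    (hα0 : 0 < α)
    (hp0 : ∀ k, k < T → ∀ j, 0 ≤ p k j)
    (hcap : ∀ k, k < T → ∀ j, p k j ≤ resLiabVec α pbar p k j)
    (j : Fin n) :
    ∀ σ, σ < T → 0 < resLiabVec α pbar p σ j →
      ∀ k, k < σ → p k j < resLiabVec α pbar p k j := by
  intro σ
  induction σ with
  | zero => intro _ _ k hk; omega
  | succ σ ih =>
    intro hT hpos k hk
    have hgap : p σ j < resLiabVec α pbar p σ j := by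
      have h1 : resLiabVec α pbar p (σ+1) j = α * (resLiabVec α pbar p σ j - p σ j) := rfl
      nlinarith [hpos, hα0]
    rcases Nat.lt_succ_iff_lt_or_eq.mp hk with h | h
    · exact ih (by omega) (lt_of_le_of_lt (hp0 σ (by omega) j) hgap) k h
    · rw [h]; exact hgap

lemma T1kill {n T : ℕ} {α η γ : ℝ} {pbar : Fin n → ℝ} {A : Matrix (Fin n) (Fin n) ℝ}
    {e : ℕ → Fin n → ℝ} {F : ℕ → ℝ} {pstar ustar : ℕ → Fin n → ℝ}
    (hγ : 0 < γ)
    (hopt : OptimalPro T α η γ pbar A e F pstar ustar)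
    (i : Fin n) (t : ℕ) (ht : t < T) (hui : 0 < ustar t i)
    (hwp : ∀ s', t < s' → s' ≤ T →
      0 < netWorthVec A (fun s l => e s l + ustar s l) pstar s' i) :
    False := by
  have hfeas := hopt.1
  set w := netWorthVec A (fun s l => e s l + ustar s l) pstar with hwdef
  have hne : (Finset.Icc (t+1) T).Nonempty := ⟨t+1, by simp; omega⟩
  set δ := min (ustar t i) ((Finset.Icc (t+1) T).inf' hne (fun s' => w s' i)) with hδ
  have hδpos : 0 < δ := by
    refine lt_min hui ?_
    rw [Finset.lt_inf'_iff]
    intro b hb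
    rw [Finset.mem_Icc] at hb
    exact hwp b (by omega) hb.2
  have hδu : δ ≤ ustar t i := min_le_left _ _
  have hδw : ∀ s', t < s' → s' ≤ T → δ ≤ w s' i := by
    intro s' h1 h2
    exact le_trans (min_le_right _ _) (Finset.inf'_le _ (by rw [Finset.mem_Icc]; omega))
  set u' := fun k (j : Fin n) => ustar k j - (if k = t ∧ j = i then δ else 0) with hu'
  have hwd : ∀ t' j, netWorthVec A (fun s l => e s l + u' s l) pstar t' j
      = w t' j - (if t < t' ∧ j = i then δ else 0) := by
    intro t' j
    rw [netWorth_closed, hwdef, netWorth_closed]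
    by_cases hj : j = i
    · subst hj
      simp only [hu', and_true, if_pos]
      rw [show (∑ k ∈ range t', (e k j + (ustar k j - if k = t then δ else 0)
          + (∑ l, A l j * pstar k l) - pstar k j))
        = (∑ k ∈ range t', (e k j + ustar k j + (∑ l, A l j * pstar k l) - pstar k j))
          - (∑ k ∈ range t', if k = t then δ else 0) by
          rw [← Finset.sum_sub_distrib]; apply Finset.sum_congr rfl; intro k _; ring]
      rw [Finset.sum_ite_eq' (range t') t (fun _ => δ)]
      simp only [Finset.mem_range]
    · simp [hu', hj]
  have hBd : ∀ t', budget u' t' = budget ustar t' - (if t < t' + 1 then δ else 0) := by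
    intro t'
    unfold budget
    have hinner : ∀ k, (∑ j, u' k j)
        = (∑ j, ustar k j) - (if k = t then δ else 0) := by
      intro k
      have hcongr : ∑ j, u' k j
          = ∑ j, (ustar k j - if j = i then (if k = t then δ else 0) else 0) :=
        Finset.sum_congr rfl (fun j _ => by
          by_cases hj : j = i <;> by_cases hk : k = t <;> simp [hu', hj, hk])
      rw [hcongr, Finset.sum_sub_distrib,
        Finset.sum_ite_eq' Finset.univ i (fun _ => (if k = t then δ else 0)),
        if_pos (Finset.mem_univ i)]
    rw [Finset.sum_congr rfl (fun k _ => hinner k), Finset.sum_sub_distrib,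
      Finset.sum_ite_eq' (range (t'+1)) t (fun _ => δ)]
    simp only [Finset.mem_range]
  have hfeas' : FeasiblePro T α pbar A e F pstar u' := by
    intro k hk
    obtain ⟨h1, h2, h3, h4, h5⟩ := hfeas k hk
    refine ⟨h1, ?_, h3, ?_, ?_⟩
    · intro j
      by_cases hj : k = t ∧ j = i
      · simp only [hu', if_pos hj]; rw [hj.1, hj.2]; linarith
      · simp [hu', hj]; exact h2 j
    · intro j
      rw [hwd]
      by_cases hj : t < k + 1 ∧ j = i
      · rw [if_pos hj, hj.2]
        have := hδw (k+1) hj.1 (by omega)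
        linarith
      · rw [if_neg hj]; simp only [sub_zero]; exact h4 j
    · rw [hBd]
      have h6 : (0:ℝ) ≤ (if t < k + 1 then δ else 0) := by split <;> linarith
      linarith
  have hcost := hopt.2 pstar u' hfeas'
  have hceq : costPro T α η γ pbar pstar u' = costPro T α η γ pbar pstar ustar - γ * δ := by
    unfold costPro
    rw [hBd (T-1), if_pos (by omega)]
    ring
  rw [hceq] at hcost
  nlinarith

set_option maxHeartbeats 1200000 in
lemma T2kill {n T : ℕ} {α η γ : ℝ} {pbar : Fin n → ℝ} {A : Matrix (Fin n) (Fin n) ℝ}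
    {e : ℕ → Fin n → ℝ} {F : ℕ → ℝ} {pstar ustar : ℕ → Fin n → ℝ}
    (hα : 1 ≤ α) (hη1 : η < 1)
    (hopt : OptimalPro T α η γ pbar A e F pstar ustar)
    (hA0 : ∀ a b, 0 ≤ A a b)
    (i : Fin n) (hrow1 : (∑ l, A i l) = 1) (hAii : A i i = 0)
    (t a σ : ℕ) (ht : t < T) (hat : a ≤ t) (htσ : t ≤ σ) (haσ : a < σ) (hσT : σ < T)
    (hui : 0 < ustar t i) (hpσ : 0 < pstar σ i)
    (hwp : ∀ s', a < s' → s' ≤ σ →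
      0 < netWorthVec A (fun s l => e s l + ustar s l) pstar s' i) :
    False := by
  have hα0 : (0:ℝ) < α := by linarith
  have hfeas := hopt.1
  set w := netWorthVec A (fun s l => e s l + ustar s l) pstar with hwdef
  set res := resLiabVec α pbar pstar with hres
  have hp0 : ∀ k, k < T → ∀ j, 0 ≤ pstar k j := fun k hk => (hfeas k hk).1
  have hcap : ∀ k, k < T → ∀ j, pstar k j ≤ res k j := by
    intro k hk j; rw [hres]; exact (hfeas k hk).2.2.1 j
  have hresσ : 0 < res σ i := lt_of_lt_of_le hpσ (hcap σ hσT i)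
  have hgap : ∀ k, k < σ → pstar k i < res k i := fun k hk =>
    gap_pos (T := T) hα0 hp0 (fun k' hk' j => (hfeas k' hk').2.2.1 j) i σ hσT
      (lt_of_lt_of_le hpσ ((hfeas σ hσT).2.2.1 i)) k hk
  set L := α ^ (σ - a) with hL
  have hLpos : 0 < L := pow_pos hα0 _
  have hL1 : 1 ≤ L := by
    rw [hL]
    calc (1:ℝ) = α ^ 0 := (pow_zero α).symm
    _ ≤ α ^ (σ - a) := pow_le_pow_right₀ hα (Nat.zero_le _)
  have hne1 : (Finset.Ico a σ).Nonempty := ⟨a, by rw [Finset.mem_Ico]; omega⟩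
  have hne2 : (Finset.Icc (a+1) σ).Nonempty := ⟨σ, by rw [Finset.mem_Icc]; omega⟩
  set m := min (min ((Finset.Ico a σ).inf' hne1 (fun k => res k i - pstar k i))
      ((Finset.Icc (a+1) σ).inf' hne2 (fun k => w k i))) (min (pstar σ i) (ustar t i)) with hm
  have hmpos : 0 < m := by
    refine lt_min (lt_min ?_ ?_) (lt_min hpσ hui)
    · rw [Finset.lt_inf'_iff]
      intro b hb; rw [Finset.mem_Ico] at hb
      have := hgap b hb.2; linarith
    · rw [Finset.lt_inf'_iff]
      intro b hb; rw [Finset.mem_Icc] at hb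
      exact hwp b (by omega) hb.2
  set δ := m / L with hδ
  have hδpos : 0 < δ := div_pos hmpos hLpos
  have hLδ : L * δ = m := by rw [hδ]; field_simp
  have hδLδ : δ ≤ L * δ := by nlinarith
  have hb_gap : ∀ k, a ≤ k → k < σ → α ^ (k - a) * δ ≤ res k i - pstar k i := by
    intro k h1 h2
    have hpow : α ^ (k - a) ≤ L := by rw [hL]; exact pow_le_pow_right₀ hα (by omega)
    have h3 : m ≤ res k i - pstar k i :=
      le_trans (le_trans (min_le_left _ _) (min_le_left _ _))
        (Finset.inf'_le _ (by rw [Finset.mem_Ico]; omega))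
    nlinarith
  have hb_w : ∀ k, a < k → k ≤ σ → L * δ ≤ w k i := by
    intro k h1 h2
    rw [hLδ]
    exact le_trans (le_trans (min_le_left _ _) (min_le_right _ _))
      (Finset.inf'_le _ (by rw [Finset.mem_Icc]; omega))
  have hb_p : L * δ ≤ pstar σ i := by
    rw [hLδ]; exact le_trans (min_le_right _ _) (min_le_left _ _)
  have hb_u : L * δ ≤ ustar t i := by
    rw [hLδ]; exact le_trans (min_le_right _ _) (min_le_right _ _)
  clear_value w res L m δ
  set p' := fun k (l : Fin n) => pstar k l +
      (if l = i then ((if k = a then δ else 0) - (if k = σ then L * δ else 0)) else 0) with hp'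
  set u' := fun k (l : Fin n) => ustar k l +
      ((if k = σ then A i l * ((L - 1) * δ) else 0)
        - (if k = t ∧ l = i then (L - 1) * δ else 0)) with hu'
  -- residual formula
  have hres' : ∀ t' l, resLiabVec α pbar p' t' l = res t' l - (if l = i then
      ((if a < t' then α ^ (t' - a) * δ else 0)
        - (if σ < t' then α ^ (t' - σ) * (L * δ) else 0)) else 0) := by
    intro t' l
    rw [resLiab_closed, hres, resLiab_closed]
    by_cases hl : l = i
    · subst hl
      simp only [hp', if_pos]
      rw [show (∑ k ∈ range t', α ^ (t' - k) * (pstar k l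
            + ((if k = a then δ else 0) - (if k = σ then L * δ else 0))))
          = (∑ k ∈ range t', α ^ (t' - k) * pstar k l)
            + ((∑ k ∈ range t', if k = a then α ^ (t' - a) * δ else 0)
             - (∑ k ∈ range t', if k = σ then α ^ (t' - σ) * (L * δ) else 0)) by
        rw [← Finset.sum_sub_distrib, ← Finset.sum_add_distrib]
        apply Finset.sum_congr rfl
        intro k hk
        by_cases h1 : k = a <;> by_cases h2 : k = σ <;>
          simp [h1, h2, show a ≠ σ by omega, show σ ≠ a by omega] <;> ring]
      rw [Finset.sum_ite_eq' (range t') a, Finset.sum_ite_eq' (range t') σ]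
      simp only [Finset.mem_range]
      ring
    · simp [hp', hl]
  -- worth formulas
  have hwd_i : ∀ t', netWorthVec A (fun s l => e s l + u' s l) p' t' i
      = w t' i + (- (if t < t' then (L-1)*δ else 0) - (if a < t' then δ else 0)
          + (if σ < t' then L*δ else 0)) := by
    intro t'
    rw [netWorth_closed, hwdef, netWorth_closed]
    have hterm : ∀ k, (e k i + u' k i + (∑ j, A j i * p' k j) - p' k i)
        = (e k i + ustar k i + (∑ j, A j i * pstar k j) - pstar k i)
          + (- (if k = t then (L-1)*δ else 0) - (if k = a then δ else 0)
            + (if k = σ then L*δ else 0)) := by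
      intro k
      have hsum : (∑ j, A j i * p' k j) = (∑ j, A j i * pstar k j)
          + A i i * ((if k = a then δ else 0) - (if k = σ then L * δ else 0)) := by
        rw [show (fun j => A j i * p' k j) = fun j => (A j i * pstar k j
            + (if j = i then A j i * ((if k = a then δ else 0)
                - (if k = σ then L * δ else 0)) else 0)) from
          funext fun j => by by_cases hj : j = i <;> simp [hp', hj] <;> ring]
        rw [Finset.sum_add_distrib, Finset.sum_ite_eq' Finset.univ i, if_pos (Finset.mem_univ i)]
      rw [hsum, hAii]
      simp only [hu', hp', if_pos, and_true, hAii, zero_mul]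
      by_cases h1 : k = t <;> by_cases h2 : k = a <;> by_cases h3 : k = σ <;>
        simp [h1, h2, h3, show a ≠ σ by omega, show σ ≠ a by omega] <;> ring
    rw [Finset.sum_congr rfl (fun k _ => hterm k), Finset.sum_add_distrib]
    congr 1
    rw [show (fun k => (- (if k = t then (L-1)*δ else 0) - (if k = a then δ else 0)
          + (if k = σ then L*δ else 0)))
        = fun k => (((0 - (if k = t then (L-1)*δ else 0)) - (if k = a then δ else 0))
          + (if k = σ then L*δ else 0)) from funext fun k => by ring]
    rw [Finset.sum_add_distrib, Finset.sum_sub_distrib, Finset.sum_sub_distrib,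
      Finset.sum_ite_eq' (range t') t, Finset.sum_ite_eq' (range t') a,
      Finset.sum_ite_eq' (range t') σ]
    simp only [Finset.mem_range, Finset.sum_const_zero]
    ring
  have hwd_ne : ∀ t' l, l ≠ i → netWorthVec A (fun s l => e s l + u' s l) p' t' l
      = w t' l + ((if σ < t' then A i l * ((L-1)*δ) else 0)
          + A i l * ((if a < t' then δ else 0) - (if σ < t' then L * δ else 0))) := by
    intro t' l hl
    rw [netWorth_closed, hwdef, netWorth_closed]
    have hterm : ∀ k, (e k l + u' k l + (∑ j, A j l * p' k j) - p' k l)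
        = (e k l + ustar k l + (∑ j, A j l * pstar k j) - pstar k l)
          + ((if k = σ then A i l * ((L-1)*δ) else 0)
            + A i l * ((if k = a then δ else 0) - (if k = σ then L * δ else 0))) := by
      intro k
      have hsum : (∑ j, A j l * p' k j) = (∑ j, A j l * pstar k j)
          + A i l * ((if k = a then δ else 0) - (if k = σ then L * δ else 0)) := by
        rw [show (fun j => A j l * p' k j) = fun j => (A j l * pstar k j
            + (if j = i then A j l * ((if k = a then δ else 0)
                - (if k = σ then L * δ else 0)) else 0)) from
          funext fun j => by by_cases hj : j = i <;> simp [hp', hj] <;> ring]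
        rw [Finset.sum_add_distrib, Finset.sum_ite_eq' Finset.univ i, if_pos (Finset.mem_univ i)]
      rw [hsum]
      have : (if k = t ∧ l = i then (L - 1) * δ else 0) = 0 := by simp [hl]
      simp only [hu', hp', this, if_neg hl]
      ring
    rw [Finset.sum_congr rfl (fun k _ => hterm k), Finset.sum_add_distrib]
    congr 1
    rw [Finset.sum_add_distrib, ← Finset.mul_sum, Finset.sum_sub_distrib,
      Finset.sum_ite_eq' (range t') σ, Finset.sum_ite_eq' (range t') a,
      Finset.sum_ite_eq' (range t') σ]
    simp only [Finset.mem_range]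
  -- budget formula
  have hBd : ∀ t', budget u' t' = budget ustar t'
      + ((if σ < t'+1 then (L-1)*δ else 0) - (if t < t'+1 then (L-1)*δ else 0)) := by
    intro t'
    unfold budget
    have hinner : ∀ k, (∑ l, u' k l) = (∑ l, ustar k l)
        + ((if k = σ then (L-1)*δ else 0) - (if k = t then (L-1)*δ else 0)) := by
      intro k
      have h1 : ∑ l, u' k l = ∑ l, (ustar k l
          + ((if k = σ then A i l * ((L-1)*δ) else 0)
            - (if l = i then (if k = t then (L-1)*δ else 0) else 0))) :=
        Finset.sum_congr rfl fun l _ => by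
          by_cases h : l = i <;> by_cases h2 : k = t <;> simp [hu', h, h2]
      rw [h1, Finset.sum_add_distrib, Finset.sum_sub_distrib, sum_ite_const,
        Finset.sum_ite_eq' Finset.univ i, if_pos (Finset.mem_univ i), ← Finset.sum_mul,
        hrow1, one_mul]
    rw [Finset.sum_congr rfl (fun k _ => hinner k), Finset.sum_add_distrib,
      Finset.sum_sub_distrib, Finset.sum_ite_eq' (range (t'+1)) σ,
      Finset.sum_ite_eq' (range (t'+1)) t]
    simp only [Finset.mem_range]
  -- feasibility of the perturbed process
  have hw4 : ∀ k, k < T → ∀ jj, 0 ≤ w (k+1) jj := by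
    intro k hk jj; rw [hwdef]; exact (hfeas k hk).2.2.2.1 jj
  have hfeas' : FeasiblePro T α pbar A e F p' u' := by
    intro k hk
    obtain ⟨h1, h2, h3, h4, h5⟩ := hfeas k hk
    refine ⟨?_, ?_, ?_, ?_, ?_⟩
    · -- p' nonneg
      intro l
      have hpv : p' k l = pstar k l
          + (if l = i then ((if k = a then δ else 0) - (if k = σ then L * δ else 0)) else 0) := rfl
      rw [hpv]
      by_cases hl : l = i
      · rw [if_pos hl, hl]
        by_cases hka : k = a
        · have hkσ : ¬ k = σ := by omega
          rw [if_pos hka, if_neg hkσ]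
          linarith [h1 i]
        · by_cases hkσ : k = σ
          · rw [if_neg hka, if_pos hkσ, hkσ]
            linarith [h1 i, hb_p, hkσ ▸ (h1 i)]
          · rw [if_neg hka, if_neg hkσ]
            simpa using h1 i
      · rw [if_neg hl, add_zero]
        exact h1 l
    · -- u' nonneg
      intro l
      have huv : u' k l = ustar k l + ((if k = σ then A i l * ((L - 1) * δ) else 0)
          - (if k = t ∧ l = i then (L - 1) * δ else 0)) := rfl
      rw [huv]
      by_cases hl : k = t ∧ l = i
      · rw [if_pos hl, hl.1, hl.2]
        by_cases hkσ : k = σ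
        · rw [if_pos (hl.1 ▸ hkσ : t = σ), hAii]
          linarith [hb_u, hδpos]
        · rw [if_neg (hl.1 ▸ hkσ : ¬ t = σ)]
          linarith [hb_u, hδpos]
      · rw [if_neg hl, sub_zero]
        by_cases hkσ : k = σ
        · rw [if_pos hkσ]
          have h9 := hA0 i l
          have h10 : 0 ≤ (L - 1) * δ := by nlinarith
          nlinarith [h2 l]
        · rw [if_neg hkσ, add_zero]
          exact h2 l
    · -- caps
      intro l
      have hpv : p' k l = pstar k l
          + (if l = i then ((if k = a then δ else 0) - (if k = σ then L * δ else 0)) else 0) := rfl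
      rw [hpv, hres' k l]
      by_cases hl : l = i
      · rw [if_pos hl, if_pos hl, hl]
        have hcapk := h3 i
        rw [← hres] at hcapk
        rcases lt_trichotomy k a with hka | hka | hka
        · rw [if_neg (by omega : ¬ k = a), if_neg (by omega : ¬ k = σ),
            if_neg (by omega : ¬ a < k), if_neg (by omega : ¬ σ < k)]
          linarith
        · rw [if_pos hka, if_neg (by omega : ¬ k = σ),
            if_neg (by omega : ¬ a < k), if_neg (by omega : ¬ σ < k)]
          have hg := hb_gap k (by omega) (by omega)
          rw [show k - a = 0 by omega, pow_zero, one_mul] at hg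
          linarith
        · rcases lt_trichotomy k σ with hd | hd | hd
          · rw [if_neg (by omega : ¬ k = a), if_neg (by omega : ¬ k = σ),
              if_pos hka, if_neg (by omega : ¬ σ < k)]
            have hg := hb_gap k (by omega) hd
            linarith
          · rw [if_neg (by omega : ¬ k = a), if_pos hd,
              if_pos hka, if_neg (by omega : ¬ σ < k)]
            have h9 : α ^ (k - a) * δ = L * δ := by rw [hL, hd]
            linarith
          · rw [if_neg (by omega : ¬ k = a), if_neg (by omega : ¬ k = σ),
              if_pos hka, if_pos hd]
            have hid : α ^ (k - a) * δ = α ^ (k - σ) * (L * δ) := by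
              rw [hL, ← mul_assoc, ← pow_add]
              congr 2
              omega
            linarith
      · rw [if_neg hl, if_neg hl, add_zero, sub_zero]
        have hcapk := h3 l
        rw [← hres] at hcapk
        exact hcapk
    · -- worth nonneg
      intro l
      by_cases hl : l = i
      · rw [hl, hwd_i]
        have hw9 := hw4 k hk i
        by_cases hva : a < k+1
        · by_cases hvt : t < k+1
          · by_cases hvσ : σ < k+1
            · rw [if_pos hva, if_pos hvt, if_pos hvσ]
              linarith
            · rw [if_pos hva, if_pos hvt, if_neg hvσ]
              linarith [hb_w (k+1) hva (by omega)]
          · rw [if_pos hva, if_neg hvt, if_neg (by omega : ¬ σ < k+1)]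
            linarith [hb_w (k+1) hva (by omega)]
        · rw [if_neg hva, if_neg (by omega : ¬ t < k+1), if_neg (by omega : ¬ σ < k+1)]
          linarith
      · rw [hwd_ne _ _ hl]
        have hAil := hA0 i l
        have hwl := hw4 k hk l
        by_cases hvσ : σ < k+1
        · rw [if_pos hvσ, if_pos (by omega : a < k+1), if_pos hvσ]
          have h9 : A i l * ((L-1)*δ) + A i l * (δ - L * δ) = 0 := by ring
          linarith
        · by_cases hva : a < k+1
          · rw [if_neg hvσ, if_pos hva, if_neg hvσ]
            have h9 : 0 ≤ A i l * (δ - 0) := by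
              have := mul_nonneg hAil (le_of_lt hδpos)
              simpa using this
            linarith
          · rw [if_neg hvσ, if_neg hva, if_neg hvσ]
            have h9 : (0:ℝ) + A i l * ((0:ℝ) - 0) = 0 := by ring
            linarith
    · -- budget
      rw [hBd]
      by_cases hσv : σ < k+1
      · rw [if_pos hσv, if_pos (by omega : t < k+1)]
        linarith
      · by_cases htv : t < k+1
        · rw [if_neg hσv, if_pos htv]
          have h9 : 0 ≤ (L-1)*δ := by nlinarith
          linarith
        · rw [if_neg hσv, if_neg htv]
          linarith
  -- cost comparison
  have hcost := hopt.2 p' u' hfeas'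
  have hterm1 : ∀ t' ∈ range T, (∑ l, (resLiabVec α pbar p' t' l - p' t' l))
      ≤ (∑ l, (resLiabVec α pbar pstar t' l - pstar t' l)) + (if t' = a then -δ else 0) := by
    intro t' htr
    rw [Finset.mem_range] at htr
    have hsum : (∑ l, (resLiabVec α pbar p' t' l - p' t' l))
        = (∑ l, (resLiabVec α pbar pstar t' l - pstar t' l))
          - (((if a < t' then α ^ (t' - a) * δ else 0)
              - (if σ < t' then α ^ (t' - σ) * (L * δ) else 0))
            + ((if t' = a then δ else 0) - (if t' = σ then L * δ else 0))) := by
      rw [show (fun l => resLiabVec α pbar p' t' l - p' t' l)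
          = fun l => (resLiabVec α pbar pstar t' l - pstar t' l)
            - (if l = i then (((if a < t' then α ^ (t' - a) * δ else 0)
                - (if σ < t' then α ^ (t' - σ) * (L * δ) else 0))
              + ((if t' = a then δ else 0) - (if t' = σ then L * δ else 0))) else 0) from
        funext fun l => by
          rw [hres' t' l]
          by_cases hl : l = i
          · subst hl
            have hpv : p' t' l = pstar t' l
                + ((if t' = a then δ else 0) - (if t' = σ then L * δ else 0)) := by
              simp [hp']
            rw [hpv, hres]
            simp only [eq_self_iff_true, if_true, ite_true]
            ring
          · simp only [hp', if_neg hl, add_zero, sub_zero, hres]]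
      rw [Finset.sum_sub_distrib, Finset.sum_ite_eq' Finset.univ i, if_pos (Finset.mem_univ i)]
    rw [hsum]
    have key : -((((if a < t' then α ^ (t' - a) * δ else 0)
              - (if σ < t' then α ^ (t' - σ) * (L * δ) else 0))
            + ((if t' = a then δ else 0) - (if t' = σ then L * δ else 0))))
        ≤ (if t' = a then -δ else 0) := by
      rcases lt_trichotomy t' a with hc | hc | hc
      · have c1 : ¬ a < t' := by omega
        have c2 : ¬ σ < t' := by omega
        have c3 : ¬ t' = a := by omega
        have c4 : ¬ t' = σ := by omega
        simp [c1, c2, c3, c4]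
      · subst hc
        have c1 : ¬ t' < t' := by omega
        have c2 : ¬ σ < t' := by omega
        have c4 : ¬ t' = σ := by omega
        simp [c1, c2, c4]
      · rcases lt_trichotomy t' σ with hd | hd | hd
        · have c1 : a < t' := hc
          have c2 : ¬ σ < t' := by omega
          have c3 : ¬ t' = a := by omega
          have c4 : ¬ t' = σ := by omega
          simp only [if_pos c1, if_neg c2, if_neg c3, if_neg c4]
          have : 0 ≤ α ^ (t' - a) * δ := by positivity
          linarith
        · subst hd
          have c1 : a < t' := hc
          have c2 : ¬ t' < t' := by omega
          have c3 : ¬ t' = a := by omega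
          simp only [if_pos c1, if_neg c2, if_neg c3, eq_self_iff_true, if_true]
          have h9 : α ^ (t' - a) * δ = L * δ := by rw [hL]
          linarith
        · have c1 : a < t' := hc
          have c2 : σ < t' := hd
          have c3 : ¬ t' = a := by omega
          have c4 : ¬ t' = σ := by omega
          simp only [if_pos c1, if_pos c2, if_neg c3, if_neg c4]
          have hid : α ^ (t' - a) * δ = α ^ (t' - σ) * (L * δ) := by
            rw [hL, ← mul_assoc, ← pow_add]
            congr 2
            omega
          linarith
    linarith
  have hS1 : (∑ t' ∈ range T, ∑ l, (resLiabVec α pbar p' t' l - p' t' l))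
      ≤ (∑ t' ∈ range T, ∑ l, (resLiabVec α pbar pstar t' l - pstar t' l)) - δ := by
    have h9 := Finset.sum_le_sum hterm1
    rw [Finset.sum_add_distrib, Finset.sum_ite_eq' (range T) a (fun _ => -δ)] at h9
    rw [if_pos (by rw [Finset.mem_range]; omega)] at h9
    linarith
  have hS2 : (∑ l, resLiabVec α pbar p' T l) = ∑ l, resLiabVec α pbar pstar T l := by
    apply Finset.sum_congr rfl
    intro l _
    rw [hres' T l, hres]
    by_cases hl : l = i
    · subst hl
      have c1 : a < T := by omega
      have c2 : σ < T := hσT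
      simp only [eq_self_iff_true, if_true, if_pos c1, if_pos c2]
      have hid : α ^ (T - a) * δ = α ^ (T - σ) * (L * δ) := by
        rw [hL, ← mul_assoc, ← pow_add]
        congr 2
        omega
      linarith
    · simp [hl]
  have hS3 : budget u' (T-1) = budget ustar (T-1) := by
    rw [hBd]
    have h7 : σ < T-1+1 := by omega
    have h8 : t < T-1+1 := by omega
    simp [h7, h8]
  have hJ : costPro T α η γ pbar p' u' ≤ costPro T α η γ pbar pstar ustar - (1-η)*δ := by
    unfold costPro
    rw [hS2, hS3]
    have h9 : (0:ℝ) ≤ 1 - η := by linarith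
    have h10 := mul_le_mul_of_nonneg_left hS1 h9
    linarith
  have h9 : 0 < (1-η)*δ := mul_pos (by linarith) hδpos
  linarith

set_option maxHeartbeats 1600000 in
lemma T3kill {n T : ℕ} {α η γ : ℝ} {pbar : Fin n → ℝ} {A : Matrix (Fin n) (Fin n) ℝ}
    {e : ℕ → Fin n → ℝ} {F : ℕ → ℝ} {pstar ustar : ℕ → Fin n → ℝ}
    (hα : 1 ≤ α) (hη1 : η < 1)
    (hopt : OptimalPro T α η γ pbar A e F pstar ustar)
    (hA0 : ∀ a b, 0 ≤ A a b)
    (i : Fin n) (hrow1 : (∑ l, A i l) = 1) (hAii : A i i = 0)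
    (t a : ℕ) (ht : t < T) (hat : a + 1 < t)
    (hui : 0 < ustar t i) (hps : 0 < pstar (a+1) i) (hpt : 0 < pstar t i)
    (hws : 0 < netWorthVec A (fun s l => e s l + ustar s l) pstar (a+1) i) :
    False := by
  have hα0 : (0:ℝ) < α := by linarith
  have hfeas := hopt.1
  set w := netWorthVec A (fun s l => e s l + ustar s l) pstar with hwdef
  set res := resLiabVec α pbar pstar with hres
  have hp0 : ∀ k, k < T → ∀ j, 0 ≤ pstar k j := fun k hk => (hfeas k hk).1
  have hcap : ∀ k, k < T → ∀ j, pstar k j ≤ res k j := by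
    intro k hk j; rw [hres]; exact (hfeas k hk).2.2.1 j
  have hgap : ∀ k, k < t → pstar k i < res k i := fun k hk =>
    gap_pos (T := T) hα0 hp0 (fun k' hk' j => (hfeas k' hk').2.2.1 j) i t ht
      (lt_of_lt_of_le hpt ((hfeas t ht).2.2.1 i)) k hk
  set R := α ^ (t - (a+1)) * (α - 1) with hR
  set K := α ^ (t - a) with hK
  have hKpos : 0 < K := pow_pos hα0 _
  have hK1 : 1 ≤ K := by
    rw [hK]
    calc (1:ℝ) = α ^ 0 := (pow_zero α).symm
    _ ≤ α ^ (t - a) := pow_le_pow_right₀ hα (Nat.zero_le _)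
  have heRK : α ^ (t - (a+1)) * α = K := by
    rw [hK, ← pow_succ]
    congr 1
    omega
  have hR0 : 0 ≤ R := by
    rw [hR]
    have := pow_nonneg (by linarith : (0:ℝ) ≤ α) (t - (a+1))
    nlinarith
  have hRK : R ≤ K := by
    rw [hR]
    have h1 := pow_nonneg (by linarith : (0:ℝ) ≤ α) (t - (a+1))
    nlinarith [heRK]
  have hne1 : (Finset.Ico a t).Nonempty := ⟨a, by rw [Finset.mem_Ico]; omega⟩
  set m := min (min ((Finset.Ico a t).inf' hne1 (fun k => res k i - pstar k i)) (w (a+1) i))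
      (min (pstar (a+1) i) (min (pstar t i) (ustar t i))) with hm
  have hmpos : 0 < m := by
    refine lt_min (lt_min ?_ hws) (lt_min hps (lt_min hpt hui))
    rw [Finset.lt_inf'_iff]
    intro b hb; rw [Finset.mem_Ico] at hb
    have := hgap b hb.2; linarith
  set δ := m / K with hδ
  have hδpos : 0 < δ := div_pos hmpos hKpos
  have hKδ : K * δ = m := by rw [hδ]; field_simp
  have hδKδ : δ ≤ K * δ := by nlinarith
  have hb_gapa : δ ≤ res a i - pstar a i := by
    have h3 : m ≤ res a i - pstar a i :=
      le_trans (le_trans (min_le_left _ _) (min_le_left _ _))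
        (Finset.inf'_le _ (by rw [Finset.mem_Ico]; omega))
    linarith
  have hb_gap : ∀ k, a+1 ≤ k → k < t → α ^ (k - (a+1)) * (α - 1) * δ ≤ res k i - pstar k i := by
    intro k h1 h2
    have e1 : α ^ (k - (a+1)) * α = α ^ (k - a) := by
      rw [← pow_succ]; congr 1; omega
    have e2 : α ^ (k - a) ≤ K := by rw [hK]; exact pow_le_pow_right₀ hα (by omega)
    have e3 : 0 ≤ α ^ (k - (a+1)) := pow_nonneg (by linarith) _
    have hcoef : α ^ (k - (a+1)) * (α - 1) ≤ K := by nlinarith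
    have h3 : m ≤ res k i - pstar k i :=
      le_trans (le_trans (min_le_left _ _) (min_le_left _ _))
        (Finset.inf'_le _ (by rw [Finset.mem_Ico]; omega))
    nlinarith
  have hb_w : δ ≤ w (a+1) i := by
    calc δ ≤ K * δ := hδKδ
    _ = m := hKδ
    _ ≤ w (a+1) i := le_trans (min_le_left _ _) (min_le_right _ _)
  have hb_ps : δ ≤ pstar (a+1) i :=
    le_trans hδKδ (hKδ ▸ le_trans (min_le_right _ _) (min_le_left _ _))
  have hb_pt : R * δ ≤ pstar t i := by
    have h3 : m ≤ pstar t i :=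
      le_trans (min_le_right _ _) (le_trans (min_le_right _ _) (min_le_left _ _))
    nlinarith [hRK, hδpos, hKδ]
  have hb_u : R * δ ≤ ustar t i := by
    have h3 : m ≤ ustar t i :=
      le_trans (min_le_right _ _) (le_trans (min_le_right _ _) (min_le_right _ _))
    nlinarith [hRK, hδpos, hKδ]
  clear_value w res R K m δ
  set p' := fun k (l : Fin n) => pstar k l +
      (if l = i then ((if k = a then δ else 0) - (if k = a+1 then δ else 0)
        - (if k = t then R * δ else 0)) else 0) with hp'
  set u' := fun k (l : Fin n) => ustar k l +
      ((if k = t then A i l * (R * δ) else 0)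
        - (if k = t ∧ l = i then R * δ else 0)) with hu'
  -- residual formula
  have hres' : ∀ t' l, resLiabVec α pbar p' t' l = res t' l - (if l = i then
      ((if a < t' then α ^ (t' - a) * δ else 0)
        - (if a+1 < t' then α ^ (t' - (a+1)) * δ else 0)
        - (if t < t' then α ^ (t' - t) * (R * δ) else 0)) else 0) := by
    intro t' l
    rw [resLiab_closed, hres, resLiab_closed]
    by_cases hl : l = i
    · subst hl
      simp only [hp', if_pos]
      rw [show (∑ k ∈ range t', α ^ (t' - k) * (pstar k l
            + ((if k = a then δ else 0) - (if k = a+1 then δ else 0)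
              - (if k = t then R * δ else 0))))
          = (∑ k ∈ range t', α ^ (t' - k) * pstar k l)
            + (((∑ k ∈ range t', if k = a then α ^ (t' - a) * δ else 0)
             - (∑ k ∈ range t', if k = a+1 then α ^ (t' - (a+1)) * δ else 0))
             - (∑ k ∈ range t', if k = t then α ^ (t' - t) * (R * δ) else 0)) by
        rw [← Finset.sum_sub_distrib, ← Finset.sum_sub_distrib, ← Finset.sum_add_distrib]
        apply Finset.sum_congr rfl
        intro k hk
        by_cases h1 : k = a <;> by_cases h2 : k = a+1 <;> by_cases h3 : k = t <;>
          simp [h1, h2, h3, show a ≠ a+1 by omega, show a+1 ≠ a by omega,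
            show a ≠ t by omega, show t ≠ a by omega,
            show a+1 ≠ t by omega, show t ≠ a+1 by omega] <;> ring]
      rw [Finset.sum_ite_eq' (range t') a, Finset.sum_ite_eq' (range t') (a+1),
        Finset.sum_ite_eq' (range t') t]
      simp only [Finset.mem_range]
      ring
    · simp [hp', hl]
  -- worth formulas
  have hwd_i : ∀ t', netWorthVec A (fun s l => e s l + u' s l) p' t' i
      = w t' i + (- (if a < t' then δ else 0) + (if a+1 < t' then δ else 0)) := by
    intro t'
    rw [netWorth_closed, hwdef, netWorth_closed]
    have hterm : ∀ k, (e k i + u' k i + (∑ j, A j i * p' k j) - p' k i)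
        = (e k i + ustar k i + (∑ j, A j i * pstar k j) - pstar k i)
          + (- (if k = a then δ else 0) + (if k = a+1 then δ else 0)) := by
      intro k
      have hsum : (∑ j, A j i * p' k j) = (∑ j, A j i * pstar k j)
          + A i i * ((if k = a then δ else 0) - (if k = a+1 then δ else 0)
            - (if k = t then R * δ else 0)) := by
        rw [show (fun j => A j i * p' k j) = fun j => (A j i * pstar k j
            + (if j = i then A j i * ((if k = a then δ else 0) - (if k = a+1 then δ else 0)
                - (if k = t then R * δ else 0)) else 0)) from
          funext fun j => by by_cases hj : j = i <;> simp [hp', hj] <;> ring]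
        rw [Finset.sum_add_distrib, Finset.sum_ite_eq' Finset.univ i, if_pos (Finset.mem_univ i)]
      rw [hsum, hAii]
      simp only [hu', hp', if_pos, and_true, hAii, zero_mul]
      by_cases h1 : k = t <;> by_cases h2 : k = a <;> by_cases h3 : k = a+1 <;>
        simp [h1, h2, h3, show a ≠ a+1 by omega, show a+1 ≠ a by omega,
          show a ≠ t by omega, show t ≠ a by omega,
          show a+1 ≠ t by omega, show t ≠ a+1 by omega] <;> ring
    rw [Finset.sum_congr rfl (fun k _ => hterm k), Finset.sum_add_distrib]
    congr 1
    rw [show (fun k => (- (if k = a then δ else 0) + (if k = a+1 then δ else 0)))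
        = fun k => ((0 - (if k = a then δ else 0)) + (if k = a+1 then δ else 0)) from
      funext fun k => by ring]
    rw [Finset.sum_add_distrib, Finset.sum_sub_distrib,
      Finset.sum_ite_eq' (range t') a, Finset.sum_ite_eq' (range t') (a+1)]
    simp only [Finset.mem_range, Finset.sum_const_zero]
    ring
  have hwd_ne : ∀ t' l, l ≠ i → netWorthVec A (fun s l => e s l + u' s l) p' t' l
      = w t' l + ((if t < t' then A i l * (R * δ) else 0)
          + A i l * ((if a < t' then δ else 0) - (if a+1 < t' then δ else 0)
            - (if t < t' then R * δ else 0))) := by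
    intro t' l hl
    rw [netWorth_closed, hwdef, netWorth_closed]
    have hterm : ∀ k, (e k l + u' k l + (∑ j, A j l * p' k j) - p' k l)
        = (e k l + ustar k l + (∑ j, A j l * pstar k j) - pstar k l)
          + ((if k = t then A i l * (R * δ) else 0)
            + A i l * ((if k = a then δ else 0) - (if k = a+1 then δ else 0)
              - (if k = t then R * δ else 0))) := by
      intro k
      have hsum : (∑ j, A j l * p' k j) = (∑ j, A j l * pstar k j)
          + A i l * ((if k = a then δ else 0) - (if k = a+1 then δ else 0)
            - (if k = t then R * δ else 0)) := by
        rw [show (fun j => A j l * p' k j) = fun j => (A j l * pstar k j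
            + (if j = i then A j l * ((if k = a then δ else 0) - (if k = a+1 then δ else 0)
                - (if k = t then R * δ else 0)) else 0)) from
          funext fun j => by by_cases hj : j = i <;> simp [hp', hj] <;> ring]
        rw [Finset.sum_add_distrib, Finset.sum_ite_eq' Finset.univ i, if_pos (Finset.mem_univ i)]
      rw [hsum]
      have hz : (if k = t ∧ l = i then R * δ else 0) = 0 := by simp [hl]
      simp only [hu', hp', hz, if_neg hl]
      ring
    rw [Finset.sum_congr rfl (fun k _ => hterm k), Finset.sum_add_distrib]
    congr 1
    rw [Finset.sum_add_distrib, ← Finset.mul_sum, Finset.sum_sub_distrib, Finset.sum_sub_distrib,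
      Finset.sum_ite_eq' (range t') t, Finset.sum_ite_eq' (range t') a,
      Finset.sum_ite_eq' (range t') (a+1), Finset.sum_ite_eq' (range t') t]
    simp only [Finset.mem_range]
  -- budget formula
  have hBd : ∀ t', budget u' t' = budget ustar t' := by
    intro t'
    unfold budget
    have hinner : ∀ k, (∑ l, u' k l) = (∑ l, ustar k l) := by
      intro k
      have h1 : ∑ l, u' k l = ∑ l, (ustar k l
          + ((if k = t then A i l * (R * δ) else 0)
            - (if l = i then (if k = t then R * δ else 0) else 0))) :=
        Finset.sum_congr rfl fun l _ => by
          by_cases h : l = i <;> by_cases h2 : k = t <;> simp [hu', h, h2]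
      rw [h1, Finset.sum_add_distrib, Finset.sum_sub_distrib, sum_ite_const,
        Finset.sum_ite_eq' Finset.univ i, if_pos (Finset.mem_univ i), ← Finset.sum_mul,
        hrow1, one_mul]
      ring
    rw [Finset.sum_congr rfl (fun k _ => hinner k)]
  -- feasibility
  have hw4 : ∀ k, k < T → ∀ jj, 0 ≤ w (k+1) jj := by
    intro k hk jj; rw [hwdef]; exact (hfeas k hk).2.2.2.1 jj
  have hfeas' : FeasiblePro T α pbar A e F p' u' := by
    intro k hk
    obtain ⟨h1, h2, h3, h4, h5⟩ := hfeas k hk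
    refine ⟨?_, ?_, ?_, ?_, ?_⟩
    · -- p' nonneg
      intro l
      have hpv : p' k l = pstar k l + (if l = i then ((if k = a then δ else 0)
          - (if k = a+1 then δ else 0) - (if k = t then R * δ else 0)) else 0) := by
        simp only [hp']
      rw [hpv]
      by_cases hl : l = i
      · rw [if_pos hl, hl]
        by_cases hka : k = a
        · rw [if_pos hka, if_neg (by omega : ¬ k = a+1), if_neg (by omega : ¬ k = t)]
          linarith [h1 i]
        · by_cases hka1 : k = a+1
          · rw [if_neg hka, if_pos hka1, if_neg (by omega : ¬ k = t), hka1]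
            linarith [hka1 ▸ (h1 i), hb_ps]
          · by_cases hkt : k = t
            · rw [if_neg hka, if_neg hka1, if_pos hkt, hkt]
              linarith [hkt ▸ (h1 i), hb_pt]
            · rw [if_neg hka, if_neg hka1, if_neg hkt]
              simpa using h1 i
      · rw [if_neg hl, add_zero]
        exact h1 l
    · -- u' nonneg
      intro l
      have huv : u' k l = ustar k l + ((if k = t then A i l * (R * δ) else 0)
          - (if k = t ∧ l = i then R * δ else 0)) := by
        simp only [hu']
      rw [huv]
      by_cases hl : k = t ∧ l = i
      · rw [if_pos hl, if_pos hl.1, hl.1, hl.2, hAii]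
        linarith [hb_u]
      · rw [if_neg hl, sub_zero]
        by_cases hkt : k = t
        · rw [if_pos hkt]
          have h9 := hA0 i l
          have h10 : 0 ≤ A i l * (R * δ) :=
            mul_nonneg h9 (mul_nonneg hR0 (le_of_lt hδpos))
          linarith [h2 l]
        · rw [if_neg hkt, add_zero]
          exact h2 l
    · -- caps
      intro l
      have hpv : p' k l = pstar k l + (if l = i then ((if k = a then δ else 0)
          - (if k = a+1 then δ else 0) - (if k = t then R * δ else 0)) else 0) := by
        simp only [hp']
      rw [hpv, hres' k l]
      by_cases hl : l = i
      · rw [if_pos hl, if_pos hl, hl]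
        have hcapk := h3 i
        rw [← hres] at hcapk
        rcases lt_trichotomy k a with hka | hka | hka
        · rw [if_neg (by omega : ¬ k = a), if_neg (by omega : ¬ k = a+1),
            if_neg (by omega : ¬ k = t), if_neg (by omega : ¬ a < k),
            if_neg (by omega : ¬ a+1 < k), if_neg (by omega : ¬ t < k)]
          linarith
        · rw [if_pos hka, if_neg (by omega : ¬ k = a+1), if_neg (by omega : ¬ k = t),
            if_neg (by omega : ¬ a < k), if_neg (by omega : ¬ a+1 < k),
            if_neg (by omega : ¬ t < k)]
          have hg := hka ▸ hb_gapa
          linarith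
        · rcases lt_trichotomy k (a+1) with hd | hd | hd
          · omega
          · rw [if_neg (by omega : ¬ k = a), if_pos hd, if_neg (by omega : ¬ k = t),
              if_pos hka, if_neg (by omega : ¬ a+1 < k), if_neg (by omega : ¬ t < k)]
            have hg := hb_gap k (by omega) (by omega)
            rw [show k - (a+1) = 0 by omega, pow_zero, one_mul] at hg
            have he : α ^ (k - a) = α := by rw [show k - a = 1 by omega, pow_one]
            rw [he]
            linarith
          · rcases lt_trichotomy k t with he | he | he
            · rw [if_neg (by omega : ¬ k = a), if_neg (by omega : ¬ k = a+1),
                if_neg (by omega : ¬ k = t), if_pos hka, if_pos hd,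
                if_neg (by omega : ¬ t < k)]
              have hg := hb_gap k (by omega) he
              have hid : α ^ (k - (a+1)) * α = α ^ (k - a) := by
                rw [← pow_succ]; congr 1; omega
              nlinarith [hg]
            · rw [if_neg (by omega : ¬ k = a), if_neg (by omega : ¬ k = a+1),
                if_pos he, if_pos hka, if_pos hd, if_neg (by omega : ¬ t < k)]
              have hid : α ^ (k - (a+1)) * α = α ^ (k - a) := by
                rw [← pow_succ]; congr 1; omega
              have hRe : α ^ (k - a) * δ - α ^ (k - (a+1)) * δ = R * δ := by
                rw [he, hR]
                nlinarith [hid, he ▸ hid]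
              linarith
            · rw [if_neg (by omega : ¬ k = a), if_neg (by omega : ¬ k = a+1),
                if_neg (by omega : ¬ k = t), if_pos hka, if_pos hd, if_pos he]
              have hid : α ^ (k - (a+1)) * α = α ^ (k - a) := by
                rw [← pow_succ]; congr 1; omega
              have hid2 : α ^ (k - t) * α ^ (t - (a+1)) = α ^ (k - (a+1)) := by
                rw [← pow_add]; congr 1; omega
              have hzero : α ^ (k - a) * δ - α ^ (k - (a+1)) * δ
                  - α ^ (k - t) * (R * δ) = 0 := by
                rw [hR, show α ^ (k - t) * (α ^ (t - (a+1)) * (α - 1) * δ)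
                    = α ^ (k - t) * α ^ (t - (a+1)) * ((α - 1) * δ) by ring, hid2, ← hid]
                ring
              linarith
      · rw [if_neg hl, if_neg hl, add_zero, sub_zero]
        have hcapk := h3 l
        rw [← hres] at hcapk
        exact hcapk
    · -- worth
      intro l
      by_cases hl : l = i
      · rw [hl, hwd_i]
        have hw9 := hw4 k hk i
        by_cases hva : a < k+1
        · by_cases hva1 : a+1 < k+1
          · rw [if_pos hva, if_pos hva1]
            linarith
          · rw [if_pos hva, if_neg hva1]
            have hkeq : k+1 = a+1 := by omega
            rw [hkeq]
            linarith [hb_w]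
        · rw [if_neg hva, if_neg (by omega : ¬ a+1 < k+1)]
          linarith
      · rw [hwd_ne _ _ hl]
        have hAil := hA0 i l
        have hwl := hw4 k hk l
        by_cases hvt : t < k+1
        · rw [if_pos hvt, if_pos (by omega : a < k+1), if_pos (by omega : a+1 < k+1), if_pos hvt]
          have h9 : A i l * (R * δ) + A i l * (δ - δ - R * δ) = 0 := by ring
          linarith
        · by_cases hva1 : a+1 < k+1
          · rw [if_neg hvt, if_pos (by omega : a < k+1), if_pos hva1, if_neg hvt]
            have h9 : (0:ℝ) + A i l * (δ - δ - 0) = 0 := by ring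
            linarith
          · by_cases hva : a < k+1
            · rw [if_neg hvt, if_pos hva, if_neg hva1, if_neg hvt]
              have h9 : 0 ≤ A i l * (δ - 0 - 0) := by
                have := mul_nonneg hAil (le_of_lt hδpos)
                simpa using this
              linarith
            · rw [if_neg hvt, if_neg hva, if_neg hva1, if_neg hvt]
              have h9 : (0:ℝ) + A i l * ((0:ℝ) - 0 - 0) = 0 := by ring
              linarith
    · -- budget
      rw [hBd]
      exact h5
  -- cost comparison
  have hcost := hopt.2 p' u' hfeas'
  have hterm1 : ∀ t' ∈ range T, (∑ l, (resLiabVec α pbar p' t' l - p' t' l))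
      ≤ (∑ l, (resLiabVec α pbar pstar t' l - pstar t' l)) + (if t' = a then -δ else 0) := by
    intro t' htr
    rw [Finset.mem_range] at htr
    have hsum : (∑ l, (resLiabVec α pbar p' t' l - p' t' l))
        = (∑ l, (resLiabVec α pbar pstar t' l - pstar t' l))
          - ((((if a < t' then α ^ (t' - a) * δ else 0)
              - (if a+1 < t' then α ^ (t' - (a+1)) * δ else 0))
              - (if t < t' then α ^ (t' - t) * (R * δ) else 0))
            + (((if t' = a then δ else 0) - (if t' = a+1 then δ else 0))
              - (if t' = t then R * δ else 0))) := by
      rw [show (fun l => resLiabVec α pbar p' t' l - p' t' l)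
          = fun l => (resLiabVec α pbar pstar t' l - pstar t' l)
            - (if l = i then ((((if a < t' then α ^ (t' - a) * δ else 0)
                - (if a+1 < t' then α ^ (t' - (a+1)) * δ else 0))
                - (if t < t' then α ^ (t' - t) * (R * δ) else 0))
              + (((if t' = a then δ else 0) - (if t' = a+1 then δ else 0))
                - (if t' = t then R * δ else 0))) else 0) from
        funext fun l => by
          rw [hres' t' l]
          by_cases hl : l = i
          · subst hl
            have hpv : p' t' l = pstar t' l + (((if t' = a then δ else 0)
                - (if t' = a+1 then δ else 0)) - (if t' = t then R * δ else 0)) := by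
              simp [hp']
            rw [hpv, hres]
            simp only [eq_self_iff_true, if_true, ite_true]
            ring
          · simp only [hp', if_neg hl, add_zero, sub_zero, hres]]
      rw [Finset.sum_sub_distrib, Finset.sum_ite_eq' Finset.univ i, if_pos (Finset.mem_univ i)]
    rw [hsum]
    have key : -(((((if a < t' then α ^ (t' - a) * δ else 0)
              - (if a+1 < t' then α ^ (t' - (a+1)) * δ else 0))
              - (if t < t' then α ^ (t' - t) * (R * δ) else 0))
            + (((if t' = a then δ else 0) - (if t' = a+1 then δ else 0))
              - (if t' = t then R * δ else 0))))
        ≤ (if t' = a then -δ else 0) := by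
      rcases lt_trichotomy t' a with hc | hc | hc
      · rw [if_neg (by omega : ¬ a < t'), if_neg (by omega : ¬ a+1 < t'),
          if_neg (by omega : ¬ t < t'), if_neg (by omega : ¬ t' = a),
          if_neg (by omega : ¬ t' = a+1), if_neg (by omega : ¬ t' = t),
          if_neg (by omega : ¬ t' = a)]
        simp
      · rw [if_neg (by omega : ¬ a < t'), if_neg (by omega : ¬ a+1 < t'),
          if_neg (by omega : ¬ t < t'), if_pos hc,
          if_neg (by omega : ¬ t' = a+1), if_neg (by omega : ¬ t' = t), if_pos hc]
        simp
      · rw [if_neg (by omega : ¬ t' = a), if_neg (by omega : ¬ t' = a), if_pos hc]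
        rcases lt_trichotomy t' (a+1) with hd | hd | hd
        · omega
        · rw [if_neg (by omega : ¬ a+1 < t'), if_neg (by omega : ¬ t < t'),
            if_pos hd, if_neg (by omega : ¬ t' = t)]
          have he : α ^ (t' - a) = α := by rw [show t' - a = 1 by omega, pow_one]
          rw [he]
          nlinarith [hδpos]
        · rcases lt_trichotomy t' t with he | he | he
          · rw [if_pos hd, if_neg (by omega : ¬ t < t'),
              if_neg (by omega : ¬ t' = a+1), if_neg (by omega : ¬ t' = t)]
            have hid : α ^ (t' - (a+1)) * α = α ^ (t' - a) := by
              rw [← pow_succ]; congr 1; omega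
            have h9 : 0 ≤ (α - 1) * (α ^ (t' - (a+1)) * δ) :=
              mul_nonneg (by linarith) (mul_nonneg (pow_nonneg (by linarith) _)
                (le_of_lt hδpos))
            have h10 : α ^ (t' - a) * δ - α ^ (t' - (a+1)) * δ
                = (α - 1) * (α ^ (t' - (a+1)) * δ) := by rw [← hid]; ring
            linarith
          · rw [if_pos hd, if_neg (by omega : ¬ t < t'),
              if_neg (by omega : ¬ t' = a+1), if_pos he]
            have hid : α ^ (t' - (a+1)) * α = α ^ (t' - a) := by
              rw [← pow_succ]; congr 1; omega
            have hRe : α ^ (t' - a) * δ - α ^ (t' - (a+1)) * δ = R * δ := by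
              rw [he, hR]
              nlinarith [hid]
            linarith
          · rw [if_pos hd, if_pos he,
              if_neg (by omega : ¬ t' = a+1), if_neg (by omega : ¬ t' = t)]
            have hid : α ^ (t' - (a+1)) * α = α ^ (t' - a) := by
              rw [← pow_succ]; congr 1; omega
            have hid2 : α ^ (t' - t) * α ^ (t - (a+1)) = α ^ (t' - (a+1)) := by
              rw [← pow_add]; congr 1; omega
            have hzero : α ^ (t' - a) * δ - α ^ (t' - (a+1)) * δ
                - α ^ (t' - t) * (R * δ) = 0 := by
              rw [hR, show α ^ (t' - t) * (α ^ (t - (a+1)) * (α - 1) * δ)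
                  = α ^ (t' - t) * α ^ (t - (a+1)) * ((α - 1) * δ) by ring, hid2, ← hid]
              ring
            linarith
    linarith
  have hS1 : (∑ t' ∈ range T, ∑ l, (resLiabVec α pbar p' t' l - p' t' l))
      ≤ (∑ t' ∈ range T, ∑ l, (resLiabVec α pbar pstar t' l - pstar t' l)) - δ := by
    have h9 := Finset.sum_le_sum hterm1
    rw [Finset.sum_add_distrib, Finset.sum_ite_eq' (range T) a (fun _ => -δ)] at h9
    rw [if_pos (by rw [Finset.mem_range]; omega)] at h9
    linarith
  have hS2 : (∑ l, resLiabVec α pbar p' T l) = ∑ l, resLiabVec α pbar pstar T l := by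
    apply Finset.sum_congr rfl
    intro l _
    rw [hres' T l, hres]
    by_cases hl : l = i
    · subst hl
      rw [if_pos rfl, if_pos (by omega : a < T), if_pos (by omega : a+1 < T),
        if_pos (by omega : t < T)]
      have hid : α ^ (T - (a+1)) * α = α ^ (T - a) := by
        rw [← pow_succ]; congr 1; omega
      have hid2 : α ^ (T - t) * α ^ (t - (a+1)) = α ^ (T - (a+1)) := by
        rw [← pow_add]; congr 1; omega
      have hzero : α ^ (T - a) * δ - α ^ (T - (a+1)) * δ
          - α ^ (T - t) * (R * δ) = 0 := by
        rw [hR, show α ^ (T - t) * (α ^ (t - (a+1)) * (α - 1) * δ)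
            = α ^ (T - t) * α ^ (t - (a+1)) * ((α - 1) * δ) by ring, hid2, ← hid]
        ring
      linarith
    · simp [hl]
  have hS3 : budget u' (T-1) = budget ustar (T-1) := hBd (T-1)
  have hJ : costPro T α η γ pbar p' u' ≤ costPro T α η γ pbar pstar ustar - (1-η)*δ := by
    unfold costPro
    rw [hS2, hS3]
    have h9 : (0:ℝ) ≤ 1 - η := by linarith
    have h10 := mul_le_mul_of_nonneg_left hS1 h9
    linarith
  have h9 : 0 < (1-η)*δ := mul_pos (by linarith) hδpos
  linarith

theorem stmt3_immediate_use_prorata (n T : ℕ) (hn : 1 ≤ n) (hT : 1 ≤ T)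
    (α : ℝ) (hα : 1 ≤ α)
    (Pbar : Matrix (Fin n) (Fin n) ℝ)
    (hPbar : ∀ i j, 0 ≤ Pbar i j) (hPdiag : ∀ i, Pbar i i = 0)
    (pbar : Fin n → ℝ) (hpbar : ∀ i, pbar i = ∑ j, Pbar i j)
    (A : Matrix (Fin n) (Fin n) ℝ) (hA : A = proRata Pbar)
    (e : ℕ → Fin n → ℝ) (he : ∀ t, t < T → ∀ i, 0 ≤ e t i)
    (F : ℕ → ℝ) (hF : ∀ t, 0 ≤ F t) (hFmono : ∀ s t, s ≤ t → F s ≤ F t)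
    (η γ : ℝ) (hη0 : 0 ≤ η) (hη1 : η < 1) (hγ : 0 < γ)
    (pstar ustar : ℕ → Fin n → ℝ)
    (hopt : OptimalPro T α η γ pbar A e F pstar ustar) :
    ∀ i : Fin n, ∀ t, t < T → 0 < ustar t i →
      netWorthVec A (fun s i => e s i + ustar s i) pstar (t + 1) i = 0 ∧
      ∀ s, s ≤ t → netWorthVec A (fun s i => e s i + ustar s i) pstar s i = 0 := by
  intro i t ht hui
  have hα0 : (0:ℝ) < α := by linarith
  have hfeas := hopt.1
  set w := netWorthVec A (fun s l => e s l + ustar s l) pstar with hwdef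
  have hA0 : ∀ a b, 0 ≤ A a b := by
    intro a b
    rw [hA]
    unfold proRata
    split
    · exact div_nonneg (hPbar a b) (le_of_lt (by assumption))
    · split
      · exact zero_le_one
      · exact le_rfl
  have hp0 : ∀ k, k < T → ∀ j, 0 ≤ pstar k j := fun k hk => (hfeas k hk).1
  have hcap : ∀ k, k < T → ∀ j, pstar k j ≤ resLiabVec α pbar pstar k j :=
    fun k hk => (hfeas k hk).2.2.1
  have hw0 : ∀ s, s ≤ T → ∀ j, 0 ≤ w s j := by
    intro s hs j
    cases s with
    | zero => exact le_rfl
    | succ k => exact (hfeas k (by omega)).2.2.2.1 j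
  have hcnn : ∀ k, k < T → ∀ j, 0 ≤ e k j + ustar k j :=
    fun k hk j => add_nonneg (he k hk j) ((hfeas k hk).2.1 j)
  have hmono : ∀ s m, s ≤ m → m ≤ T → (∀ k, s ≤ k → k < m → pstar k i = 0) →
      w s i ≤ w m i := by
    intro s m h1 h2 h3
    rw [hwdef]
    exact worth_mono (T := T) hA0 hcnn hp0 i s m h1 h2 h3
  have hpbarpos : ∀ k, k < T → 0 < pstar k i → 0 < pbar i := by
    intro k hk hpk
    have h1 := hcap k hk i
    rw [resLiab_closed] at h1
    have h2 : 0 ≤ ∑ k' ∈ range k, α ^ (k - k') * pstar k' i :=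
      Finset.sum_nonneg fun k' hk' => mul_nonneg (pow_nonneg (by linarith) _)
        (hp0 k' (by rw [Finset.mem_range] at hk'; omega) i)
    nlinarith [pow_pos hα0 k]
  have hrowfact : 0 < pbar i → ((∑ l, A i l) = 1 ∧ A i i = 0) := by
    intro hpb
    have hS : 0 < ∑ k', Pbar i k' := by rw [hpbar i] at hpb; exact hpb
    constructor
    · rw [hA]
      unfold proRata
      simp only [if_pos hS]
      rw [← Finset.sum_div]
      exact div_self (ne_of_gt hS)
    · rw [hA]
      unfold proRata
      simp only [if_pos hS]
      rw [hPdiag i, zero_div]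
  have hincl : ∀ k, k < T → 0 ≤ ∑ j, A j i * pstar k j := fun k hk =>
    Finset.sum_nonneg fun j _ => mul_nonneg (hA0 j i) (hp0 k hk j)
  -- Part 1
  have part1 : w (t+1) i = 0 := by
    by_contra hne
    have hwpos : 0 < w (t+1) i := lt_of_le_of_ne (hw0 (t+1) (by omega) i) (Ne.symm hne)
    by_cases hSne : ((Finset.Ico (t+1) T).filter (fun s' => 0 < pstar s' i)).Nonempty
    · obtain ⟨σ, hσmem, hσmin⟩ : ∃ σ ∈ (Finset.Ico (t+1) T).filter (fun s' => 0 < pstar s' i),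
          ∀ k ∈ (Finset.Ico (t+1) T).filter (fun s' => 0 < pstar s' i), σ ≤ k :=
        ⟨_, Finset.min'_mem _ hSne, fun k hk => Finset.min'_le _ k hk⟩
      rw [Finset.mem_filter, Finset.mem_Ico] at hσmem
      have hpσ : 0 < pstar σ i := hσmem.2
      have hzero : ∀ k, t+1 ≤ k → k < σ → pstar k i = 0 := by
        intro k h1 h2
        by_contra hnz
        have hkσT : σ < T := hσmem.1.2
        have hkpos : 0 < pstar k i := lt_of_le_of_ne (hp0 k (by omega) i) (Ne.symm hnz)
        have := hσmin k (by rw [Finset.mem_filter, Finset.mem_Ico]; exact ⟨⟨h1, by omega⟩, hkpos⟩)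
        omega
      have hwp : ∀ s', t < s' → s' ≤ σ → 0 < w s' i := by
        intro s' h1 h2
        have := hmono (t+1) s' (by omega) (by omega) (fun k hk1 hk2 => hzero k hk1 (by omega))
        linarith
      obtain ⟨hrow1, hAii⟩ := hrowfact (hpbarpos σ hσmem.1.2 hpσ)
      exact T2kill hα hη1 hopt hA0 i hrow1 hAii t t σ ht le_rfl (by omega) (by omega)
        hσmem.1.2 hui hpσ hwp
    · have hzero : ∀ k, t+1 ≤ k → k < T → pstar k i = 0 := by
        intro k h1 h2
        by_contra hnz
        have hkpos : 0 < pstar k i := lt_of_le_of_ne (hp0 k h2 i) (Ne.symm hnz)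
        exact hSne ⟨k, by rw [Finset.mem_filter, Finset.mem_Ico]; exact ⟨⟨h1, h2⟩, hkpos⟩⟩
      have hwp : ∀ s', t < s' → s' ≤ T → 0 < w s' i := by
        intro s' h1 h2
        have := hmono (t+1) s' (by omega) h2 (fun k hk1 hk2 => hzero k hk1 (by omega))
        linarith
      exact T1kill hγ hopt i t ht hui hwp
  refine ⟨part1, ?_⟩
  have key : ∀ d s, s + d = t + 1 → w s i = 0 := by
    intro d
    induction d with
    | zero =>
      intro s hs
      have hseq : s = t+1 := by omega
      rw [hseq]
      exact part1
    | succ d ih =>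
      intro s hs
      rcases Nat.eq_zero_or_pos s with h0 | h1
      · rw [h0, hwdef]
        rfl
      · by_contra hne
        have hst : s ≤ t := by omega
        have hwpos : 0 < w s i := lt_of_le_of_ne (hw0 s (by omega) i) (Ne.symm hne)
        have hnext : w (s+1) i = 0 := ih (s+1) (by omega)
        have hstep : w (s+1) i = w s i + (e s i + ustar s i)
            + (∑ j, A j i * pstar s j) - pstar s i := by
          rw [hwdef]
          rfl
        have hps : 0 < pstar s i := by
          have hc := hcnn s (by omega) i
          have hinc := hincl s (by omega)
          linarith [hstep, hnext]
        have hpt : 0 < pstar t i := by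
          by_contra hle
          have hpt0 : pstar t i = 0 := le_antisymm (le_of_not_gt hle) (hp0 t ht i)
          have hstep2 : w (t+1) i = w t i + (e t i + ustar t i)
              + (∑ j, A j i * pstar t j) - pstar t i := by
            rw [hwdef]
            rfl
          have hwt := hw0 t (by omega) i
          have he2 := he t ht i
          have hinc2 := hincl t ht
          rw [part1, hpt0] at hstep2
          linarith
        obtain ⟨hrow1, hAii⟩ := hrowfact (hpbarpos t ht hpt)
        rcases eq_or_lt_of_le hst with hst' | hst'
        · obtain ⟨a, rfl⟩ : ∃ a, s = a+1 := ⟨s-1, by omega⟩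
          apply T2kill hα hη1 hopt hA0 i hrow1 hAii t a t ht (by omega) le_rfl (by omega)
            ht hui (hst' ▸ hps)
          intro s' h1' h2'
          have hseq : s' = a+1 := by omega
          rw [hseq]
          exact hwpos
        · obtain ⟨a, rfl⟩ : ∃ a, s = a+1 := ⟨s-1, by omega⟩
          exact T3kill hα hη1 hopt hA0 i hrow1 hAii t a ht (by omega) hui hps hpt hwpos
  intro s hs
  exact key (t+1-s) s (by omega)
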